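/- arXiv:2401.05829 — 2 statements merged into one kernel-verified Lean document; each statement's English description precedes it below -/
import Mathlib

section
/- Let n ≥ 2 and 0 < λ ≤ Λ, excluding the case n = 2 and λ = Λ, and set γ = 1 − (n−1)Λ/λ < 0. Then E⁻(x) = |x|^γ satisfies M⁻(D²E⁻(x), λ, Λ) = 0 for every x ∈ ℝⁿ \ {0}. -/
noncomputable def hessMat (n : ℕ) (u : EuclideanSpace ℝ (Fin n) → ℝ)
    (x : EuclideanSpace ℝ (Fin n)) : Matrix (Fin n) (Fin n) ℝ :=
  Matrix.of fun i j =>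
    fderiv ℝ (fun y => fderiv ℝ u y (EuclideanSpace.single j 1)) x (EuclideanSpace.single i 1)

/-- Pucci minimal operator. -/
noncomputable def pucciInf {n : ℕ} (l L : ℝ) (M : Matrix (Fin n) (Fin n) ℝ)
    (hM : M.IsHermitian) : ℝ :=
  ∑ i, (l * max (hM.eigenvalues i) 0 + L * min (hM.eigenvalues i) 0)

section Aux

open Real Filter Matrix

variable {n : ℕ}

local notation "E" => EuclideanSpace ℝ (Fin n)

lemma myHasFDerivAt_inner_self (y : E) :
    HasFDerivAt (fun z : E => (inner ℝ z z : ℝ)) ((2:ℝ) • (innerSL ℝ y)) y := by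
  have h := HasFDerivAt.inner ℝ (hasFDerivAt_id y) (hasFDerivAt_id y)
  refine HasFDerivAt.congr_fderiv h ?_
  ext w
  simp [real_inner_comm, two_mul, mul_comm]

lemma myInner_rpow (y : E) (p : ℝ) : (inner ℝ y y : ℝ) ^ p = ‖y‖ ^ (2 * p) := by
  rw [real_inner_self_eq_norm_sq, ← Real.rpow_natCast ‖y‖ 2,
    ← Real.rpow_mul (norm_nonneg y)]
  norm_num

lemma myHasFDerivAt_inner_rpow (p : ℝ) {y : E} (hy : y ≠ 0) :
    HasFDerivAt (fun z : E => (inner ℝ z z : ℝ) ^ p)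
      ((2 * p * (inner ℝ y y : ℝ) ^ (p - 1)) • innerSL ℝ y) y := by
  have h0 : (inner ℝ y y : ℝ) ≠ 0 := by
    rw [real_inner_self_eq_norm_sq]
    exact pow_ne_zero _ (norm_ne_zero_iff.2 hy)
  have hd : HasDerivAt (fun t : ℝ => t ^ p) (p * (inner ℝ y y : ℝ) ^ (p - 1)) (inner ℝ y y : ℝ) :=
    Real.hasDerivAt_rpow_const (Or.inl h0)
  have h := HasDerivAt.comp_hasFDerivAt (f := fun z : E => (inner ℝ z z : ℝ)) y hd
    (myHasFDerivAt_inner_self y)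
  refine HasFDerivAt.congr_fderiv h ?_
  ext w
  simp [ContinuousLinearMap.smul_apply, smul_eq_mul]
  ring

lemma myHasFDerivAt_norm_rpow (γ : ℝ) {y : E} (hy : y ≠ 0) :
    HasFDerivAt (fun z : E => ‖z‖ ^ γ)
      ((γ * (inner ℝ y y : ℝ) ^ (γ / 2 - 1)) • innerSL ℝ y) y := by
  have he : (fun z : E => ‖z‖ ^ γ) = fun z : E => (inner ℝ z z : ℝ) ^ (γ / 2) := by
    funext z
    rw [myInner_rpow]
    ring_nf
  rw [he]
  have h := myHasFDerivAt_inner_rpow (γ / 2) hy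
  convert h using 2
  ring

lemma myFderiv_norm_rpow (γ : ℝ) {y : E} (hy : y ≠ 0) (j : Fin n) :
    fderiv ℝ (fun z : E => ‖z‖ ^ γ) y (EuclideanSpace.single j 1)
      = γ * (inner ℝ y y : ℝ) ^ (γ / 2 - 1) * y j := by
  rw [(myHasFDerivAt_norm_rpow γ hy).fderiv]
  simp [innerSL_apply_apply, EuclideanSpace.inner_single_right]

lemma myHessEntry (γ : ℝ) {x : E} (hx : x ≠ 0) (i j : Fin n) :
    fderiv ℝ (fun y : E => fderiv ℝ (fun z : E => ‖z‖ ^ γ) y (EuclideanSpace.single j 1)) x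
        (EuclideanSpace.single i 1)
      = γ * (γ - 2) * ‖x‖ ^ (γ - 4) * x i * x j
        + (if i = j then γ * ‖x‖ ^ (γ - 2) else 0) := by
  have h1 := myHasFDerivAt_inner_rpow (γ / 2 - 1) hx
  have h2 : HasFDerivAt (fun y : E => y j) (EuclideanSpace.proj j (𝕜 := ℝ)) x :=
    (EuclideanSpace.proj j (𝕜 := ℝ)).hasFDerivAt
  have hG := (h1.mul h2).const_mul γ
  have hev : (fun y : E => fderiv ℝ (fun z : E => ‖z‖ ^ γ) y (EuclideanSpace.single j 1))
      =ᶠ[nhds x] (fun y : E => γ * ((inner ℝ y y : ℝ) ^ (γ / 2 - 1) * y j)) := by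
    filter_upwards [IsOpen.mem_nhds isOpen_compl_singleton hx] with y hy
    rw [myFderiv_norm_rpow γ hy j]
    ring
  rw [hev.fderiv_eq, HasFDerivAt.fderiv (f := fun y : E => γ * ((inner ℝ y y : ℝ) ^ (γ / 2 - 1) * y j)) hG]
  have e1 : (inner ℝ x x : ℝ) ^ (γ / 2 - 1) = ‖x‖ ^ (γ - 2) := by
    rw [myInner_rpow]; ring_nf
  have e2 : (inner ℝ x x : ℝ) ^ (γ / 2 - 1 - 1) = ‖x‖ ^ (γ - 4) := by
    rw [myInner_rpow]; ring_nf
  simp only [ContinuousLinearMap.smul_apply, ContinuousLinearMap.add_apply,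
    ContinuousLinearMap.smul_apply, innerSL_apply_apply, smul_eq_mul,
    EuclideanSpace.inner_single_right, PiLp.proj_apply,
    EuclideanSpace.single_apply, e1, e2]
  rcases eq_or_ne i j with rfl | hij
  · simp; ring
  · simp [hij, Ne.symm hij]; ring

lemma myTrace_eq {m : ℕ} {A : Matrix (Fin m) (Fin m) ℝ} (hA : A.IsHermitian) :
    A.trace = ∑ i, hA.eigenvalues i := by
  conv_lhs => rw [hA.spectral_theorem, Unitary.conjStarAlgAut_apply]
  rw [Matrix.trace_mul_cycle]
  rw [Unitary.coe_star_mul_self (Matrix.IsHermitian.eigenvectorUnitary hA), one_mul,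
    Matrix.trace_diagonal]
  simp

lemma myEig_mem {m : ℕ} (x : Fin m → ℝ) (a b : ℝ)
    {A : Matrix (Fin m) (Fin m) ℝ}
    (hAdef : ∀ i j, A i j = b * x i * x j + (if i = j then a else 0))
    (hA : A.IsHermitian) (i : Fin m) :
    hA.eigenvalues i = a ∨ hA.eigenvalues i = a + b * (dotProduct x x) := by
  set μ := hA.eigenvalues i with hμ
  set v := ⇑(hA.eigenvectorBasis i) with hv
  have hmv : A *ᵥ v = μ • v := hA.mulVec_eigenvectorBasis i
  obtain ⟨k0, hk0⟩ : ∃ k, v k ≠ 0 := by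
    by_contra hc
    push_neg at hc
    refine hA.eigenvectorBasis.orthonormal.ne_zero i ?_
    ext k
    exact hc k
  set d := dotProduct x v with hd
  have hp : ∀ k, b * x k * d + a * v k = μ * v k := by
    intro k
    have h0 := congrFun hmv k
    rw [Matrix.mulVec, Pi.smul_apply, smul_eq_mul] at h0
    rw [← h0]
    simp only [dotProduct, hAdef, add_mul, Finset.sum_add_distrib, smul_eq_mul, hd]
    congr 1
    · rw [Finset.mul_sum]
      exact Finset.sum_congr rfl fun j _ => by ring
    · simp [ite_mul]
  by_cases hd0 : d = 0
  · left
    have := hp k0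
    rw [hd0] at this
    have : a * v k0 = μ * v k0 := by linarith
    exact (mul_right_cancel₀ hk0 this.symm)
  · right
    have hsum : ∑ k, x k * (b * x k * d) = ∑ k, x k * ((μ - a) * v k) := by
      refine Finset.sum_congr rfl fun k _ => ?_
      have e : b * x k * d = (μ - a) * v k := by linarith [hp k]
      rw [e]
    have h1 : ∑ k, x k * (b * x k * d) = b * d * dotProduct x x := by
      rw [dotProduct, Finset.mul_sum]
      exact Finset.sum_congr rfl fun k _ => by ring
    have h2 : ∑ k, x k * ((μ - a) * v k) = (μ - a) * d := by
      rw [hd, dotProduct, Finset.mul_sum]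
      exact Finset.sum_congr rfl fun k _ => by ring
    rw [h1, h2] at hsum
    have h3 : b * dotProduct x x * d = (μ - a) * d := by linarith
    have := mul_right_cancel₀ hd0 h3
    linarith

end Aux

/-- excluding the case `n = 2, λ = Λ`, with `γ = 1 − (n−1)Λ/λ < 0`, the
function `E⁻(x) = |x|^γ` satisfies `M⁻(D²E⁻(x), λ, Λ) = 0` for every `x ≠ 0`. -/
theorem stmt5 (n : ℕ) (hn : 2 ≤ n) (l L : ℝ) (hl : 0 < l) (hlL : l ≤ L)
    (hexc : ¬(n = 2 ∧ l = L)) (γ : ℝ) (hγ : γ = 1 - (n - 1) * L / l) :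
    γ < 0 ∧
    ∀ x : EuclideanSpace ℝ (Fin n), x ≠ 0 →
      ∃ h : (hessMat n (fun y => ‖y‖ ^ γ) x).IsHermitian,
        pucciInf l L (hessMat n (fun y => ‖y‖ ^ γ) x) h = 0 := by
  have hL : 0 < L := lt_of_lt_of_le hl hlL
  have hγ0 : γ < 0 := by
    rw [hγ]
    have h1 : (1:ℝ) ≤ L / l := (one_le_div hl).2 hlL
    have hdiv : ((n:ℝ) - 1) * L / l = ((n:ℝ) - 1) * (L / l) := by ring
    rcases lt_or_eq_of_le hn with h3 | h2
    · have hn3 : (3:ℝ) ≤ (n:ℝ) := by exact_mod_cast h3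
      have h4 : (2:ℝ) ≤ ((n:ℝ) - 1) * (L / l) := by nlinarith
      rw [hdiv]
      linarith
    · have hlL' : l < L := lt_of_le_of_ne hlL (fun h => hexc ⟨h2.symm, h⟩)
      have hn2 : (n:ℝ) = 2 := by exact_mod_cast h2.symm
      have h4 : 1 < L / l := (one_lt_div hl).2 hlL'
      rw [hdiv, hn2]
      linarith
  refine ⟨hγ0, ?_⟩
  intro x hx
  have hr : 0 < ‖x‖ := norm_pos_iff.2 hx
  set a := γ * ‖x‖ ^ (γ - 2) with ha
  set b := γ * (γ - 2) * ‖x‖ ^ (γ - 4) with hb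
  have hMdef : ∀ i j, hessMat n (fun y => ‖y‖ ^ γ) x i j
      = b * x i * x j + (if i = j then a else 0) := by
    intro i j
    exact myHessEntry γ hx i j
  have hHerm : (hessMat n (fun y => ‖y‖ ^ γ) x).IsHermitian := by
    show Matrix.conjTranspose (hessMat n (fun y => ‖y‖ ^ γ) x) = hessMat n (fun y => ‖y‖ ^ γ) x
    ext i j
    rw [Matrix.conjTranspose_apply, hMdef j i, hMdef i j]
    rcases eq_or_ne i j with rfl | hij
    · simp
    · simp [hij, Ne.symm hij]; ring
  refine ⟨hHerm, ?_⟩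
  have hp2 : 0 < ‖x‖ ^ (γ - 2) := Real.rpow_pos_of_pos hr _
  have hane : a < 0 := mul_neg_of_neg_of_pos hγ0 hp2
  have hdot : dotProduct (x : Fin n → ℝ) x = ‖x‖ ^ 2 := by
    rw [← real_inner_self_eq_norm_sq]
    simp [dotProduct, PiLp.inner_apply, RCLike.inner_apply, mul_comm]
    rw [EuclideanSpace.real_norm_sq_eq]; simp [sq]
  set c := a + b * dotProduct (x : Fin n → ℝ) x with hcdef
  have hpow : ‖x‖ ^ (γ - 4) * ‖x‖ ^ (2:ℕ) = ‖x‖ ^ (γ - 2) := by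
    rw [← Real.rpow_natCast ‖x‖ 2, ← Real.rpow_add hr]
    congr 1
    ring
  have hc : c = γ * (γ - 1) * ‖x‖ ^ (γ - 2) := by
    rw [hcdef, hdot, ha, hb]
    rw [mul_assoc (γ * (γ - 2))]
    rw [hpow]
    ring
  have hcpos : 0 < c := by
    rw [hc]
    exact mul_pos (mul_pos_of_neg_of_neg hγ0 (by linarith)) hp2
  have heig : ∀ i, hHerm.eigenvalues i = a ∨ hHerm.eigenvalues i = c :=
    myEig_mem (x : Fin n → ℝ) a b hMdef hHerm
  have htr : ∑ i, hHerm.eigenvalues i = (n:ℝ) * a + (c - a) := by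
    rw [← myTrace_eq hHerm]
    have : (hessMat n (fun y => ‖y‖ ^ γ) x).trace
        = ∑ i, (b * x i * x i + a) := by
      rw [Matrix.trace]
      exact Finset.sum_congr rfl fun i _ => by rw [Matrix.diag_apply, hMdef]; simp
    rw [this, Finset.sum_add_distrib, Finset.sum_const, Finset.card_univ, Fintype.card_fin,
      nsmul_eq_mul]
    have hsb : ∑ i, b * x i * x i = b * dotProduct (x : Fin n → ℝ) x := by
      rw [dotProduct, Finset.mul_sum]
      exact Finset.sum_congr rfl fun i _ => by ring
    rw [hsb, hcdef]
    ring
  have hca : c - a ≠ 0 := ne_of_gt (by linarith)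
  set k := (l * c - L * a) / (c - a) with hk
  have key : ∀ i, l * max (hHerm.eigenvalues i) 0 + L * min (hHerm.eigenvalues i) 0
      = L * a + (hHerm.eigenvalues i - a) * k := by
    intro i
    rcases heig i with h | h <;> rw [h]
    · rw [max_eq_right hane.le, min_eq_left hane.le]
      ring
    · rw [max_eq_left hcpos.le, min_eq_right hcpos.le, hk]
      field_simp
      ring
  have hrel : l * (γ - 1) = -(((n:ℝ) - 1) * L) := by
    rw [hγ]
    field_simp
    ring
  show ∑ i, (l * max (hHerm.eigenvalues i) 0 + L * min (hHerm.eigenvalues i) 0) = 0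
  rw [Finset.sum_congr rfl fun i _ => key i]
  rw [Finset.sum_add_distrib, Finset.sum_const, Finset.card_univ, Fintype.card_fin,
    nsmul_eq_mul, ← Finset.sum_mul, Finset.sum_sub_distrib, Finset.sum_const,
    Finset.card_univ, Fintype.card_fin, nsmul_eq_mul, htr]
  have hsimp : ((n:ℝ) * a + (c - a) - (n:ℝ) * a) * k = l * c - L * a := by
    rw [hk]
    field_simp
    ring
  rw [hsimp, hc, ha]
  linear_combination (γ * ‖x‖ ^ (γ - 2)) * hrel
end

section
/- Let n ≥ 3 and let u, v be harmonic on ℝⁿ \ B̄₁ and continuous on ℝⁿ \ B₁, with u(x) → +∞ and v(x) → +∞ as |x| → ∞, and suppose u(x)/v(x) → a ∈ (0, ∞) as |x| → ∞. Then a·v(x) − a·max_{∂B₁} v + min_{∂B₁} u ≤ u(x) ≤ a·v(x) − a·min_{∂B₁} v + max_{∂B₁} u for all |x| ≥ 1; in particular there is a constant C with |u(x) − a·v(x)| ≤ C on ℝⁿ \ B₁. -/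
open Filter Topology Set

lemma oneD {φ : ℝ → ℝ} (hmin : IsLocalMin φ 0)
    (h1 : ∀ᶠ t in 𝓝 (0:ℝ), DifferentiableAt ℝ φ t)
    (h2 : DifferentiableAt ℝ (deriv φ) 0) :
    0 ≤ deriv (deriv φ) 0 := by
  by_contra hc
  push_neg at hc
  have hd0 : deriv φ 0 = 0 := hmin.deriv_eq_zero
  have hslope : Tendsto (fun t => deriv φ t / t) (𝓝[≠] (0:ℝ)) (𝓝 (deriv (deriv φ) 0)) := by
    have h := h2.hasDerivAt
    rw [hasDerivAt_iff_tendsto_slope] at h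
    refine h.congr' ?_
    filter_upwards [self_mem_nhdsWithin] with t ht
    simp [slope_def_field, hd0, div_eq_inv_mul]
  have hev : ∀ᶠ t in 𝓝[>] (0:ℝ), deriv φ t / t < 0 :=
    (hslope.mono_left (nhdsWithin_mono _ (fun t ht => ht.ne'))).eventually_lt_const hc
  have hall : ∀ᶠ t in 𝓝[>] (0:ℝ),
      deriv φ t < 0 ∧ DifferentiableAt ℝ φ t ∧ φ 0 ≤ φ t := by
    filter_upwards [hev, eventually_nhdsWithin_of_eventually_nhds h1,
      eventually_nhdsWithin_of_eventually_nhds (hmin : ∀ᶠ t in 𝓝 (0:ℝ), φ 0 ≤ φ t), self_mem_nhdsWithin]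
      with t h1 h2 h3 (h4 : 0 < t)
    refine ⟨?_, h2, h3⟩
    rcases div_neg_iff.1 h1 with h | h
    · linarith [h.2]
    · exact h.1
  obtain ⟨ε, hε, hIoo⟩ := mem_nhdsGT_iff_exists_Ioo_subset.1 hall
  have hεpos : 0 < ε := hε
  have hsub : Ioo (0:ℝ) (ε/2 + ε/4) ⊆ Ioo 0 ε := Ioo_subset_Ioo le_rfl (by linarith)
  have hanti : StrictAntiOn φ (Icc 0 (ε/2)) := by
    apply strictAntiOn_of_deriv_neg (convex_Icc _ _)
    · intro t ht
      rcases eq_or_lt_of_le ht.1 with h | h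
      · subst h
        exact ((h1.self_of_nhds).continuousAt).continuousWithinAt
      · exact ((hIoo ⟨h, lt_of_le_of_lt ht.2 (by linarith)⟩).2.1.continuousAt).continuousWithinAt
    · intro t ht
      rw [interior_Icc] at ht
      exact (hIoo ⟨ht.1, ht.2.trans (by linarith)⟩).1
  have h02 : φ (ε/2) < φ 0 :=
    hanti ⟨le_rfl, by linarith⟩ ⟨by linarith, le_rfl⟩ (by linarith)
  have hm := (hIoo (show (ε/2) ∈ Ioo (0:ℝ) ε from ⟨by linarith, by linarith⟩)).2.2
  linarith

lemma d2_nonneg {E : Type*} [NormedAddCommGroup E] [NormedSpace ℝ E]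
    {g : E → ℝ} {z : E} (hg : ContDiffAt ℝ 2 g z) (hmin : IsLocalMin g z) (e : E) :
    0 ≤ fderiv ℝ (fun y => fderiv ℝ g y e) z e := by
  set L : ℝ → E := fun t => z + t • e with hL
  have hL0 : L 0 = z := by simp [hL]
  have hLc : Continuous L := by fun_prop
  have hLd : ∀ t : ℝ, HasDerivAt L e t := fun t => by
    simpa [hL] using ((hasDerivAt_id t).smul_const e).const_add z
  set φ : ℝ → ℝ := g ∘ L with hφ
  have h0 : Tendsto L (𝓝 0) (𝓝 z) := by rw [← hL0]; exact hLc.tendsto 0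
  have hminφ : IsLocalMin φ 0 := by
    have h' := h0.eventually (hmin : ∀ᶠ y in 𝓝 z, g z ≤ g y)
    filter_upwards [h'] with t ht
    simpa [hφ, hL0] using ht
  have hevg : ∀ᶠ t in 𝓝 (0:ℝ), ContDiffAt ℝ 2 g (L t) := by
    exact h0.eventually (hg.eventually (by norm_num))
  have hder : ∀ᶠ t in 𝓝 (0:ℝ), HasDerivAt φ (fderiv ℝ g (L t) e) t := by
    filter_upwards [hevg] with t ht
    exact (ht.differentiableAt two_ne_zero).hasFDerivAt.comp_hasDerivAt t (hLd t)
  have h1 : ∀ᶠ t in 𝓝 (0:ℝ), DifferentiableAt ℝ φ t := by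
    filter_upwards [hder] with t ht using ht.differentiableAt
  set ψ : E → ℝ := fun y => fderiv ℝ g y e with hψdef
  have hF : ContDiffAt ℝ 1 (fderiv ℝ g) z := hg.fderiv_right (by norm_num)
  have hψ : DifferentiableAt ℝ ψ z := by
    exact (ContinuousLinearMap.apply ℝ ℝ e).differentiable.differentiableAt.comp z
      (hF.differentiableAt one_ne_zero)
  have hψL : HasDerivAt (ψ ∘ L) (fderiv ℝ ψ z e) 0 := by
    have h' : HasFDerivAt ψ (fderiv ℝ ψ z) (L 0) := hL0.symm ▸ hψ.hasFDerivAt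
    exact h'.comp_hasDerivAt 0 (hLd 0)
  have heq : deriv φ =ᶠ[𝓝 (0:ℝ)] ψ ∘ L := by
    filter_upwards [hder] with t ht using ht.deriv
  have h2' : deriv (deriv φ) 0 = fderiv ℝ ψ z e := by
    rw [heq.deriv_eq]
    exact hψL.deriv
  have h2 : DifferentiableAt ℝ (deriv φ) 0 := by
    rw [EventuallyEq.differentiableAt_iff heq]
    exact hψL.differentiableAt
  have := oneD hminφ h1 h2
  rwa [h2'] at this

noncomputable def lap (n : ℕ) (u : EuclideanSpace ℝ (Fin n) → ℝ)
    (x : EuclideanSpace ℝ (Fin n)) : ℝ :=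
  ∑ i, fderiv ℝ (fun y => fderiv ℝ u y (EuclideanSpace.single i 1)) x
    (EuclideanSpace.single i 1)

lemma lap_nonneg_localMin (n : ℕ) {g : EuclideanSpace ℝ (Fin n) → ℝ}
    {x : EuclideanSpace ℝ (Fin n)} (hg : ContDiffAt ℝ 2 g x) (hmin : IsLocalMin g x) :
    0 ≤ lap n g x :=
  Finset.sum_nonneg fun i _ => d2_nonneg hg hmin _

lemma diff_psi {E : Type*} [NormedAddCommGroup E] [NormedSpace ℝ E]
    {f : E → ℝ} {x : E} (hf : ContDiffAt ℝ 2 f x) (e : E) :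
    DifferentiableAt ℝ (fun y => fderiv ℝ f y e) x :=
  (ContinuousLinearMap.apply ℝ ℝ e).differentiable.differentiableAt.comp x
    ((hf.fderiv_right (m := 1) (by norm_num)).differentiableAt one_ne_zero)

lemma lap_comb (n : ℕ) {u v : EuclideanSpace ℝ (Fin n) → ℝ} {x : EuclideanSpace ℝ (Fin n)}
    (hu : ContDiffAt ℝ 2 u x) (hv : ContDiffAt ℝ 2 v x) (c d b : ℝ) :
    lap n (fun y => c * u y + d * v y + b) x = c * lap n u x + d * lap n v x := by
  have hud : ∀ᶠ y in nhds x, DifferentiableAt ℝ u y :=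
    (hu.eventually (by norm_num)).mono fun y hy => hy.differentiableAt two_ne_zero
  have hvd : ∀ᶠ y in nhds x, DifferentiableAt ℝ v y :=
    (hv.eventually (by norm_num)).mono fun y hy => hy.differentiableAt two_ne_zero
  have key : ∀ e : EuclideanSpace ℝ (Fin n),
      fderiv ℝ (fun y => fderiv ℝ (fun z => c * u z + d * v z + b) y e) x e
        = c * fderiv ℝ (fun y => fderiv ℝ u y e) x e
          + d * fderiv ℝ (fun y => fderiv ℝ v y e) x e := by
    intro e
    have hev : (fun y => fderiv ℝ (fun z => c * u z + d * v z + b) y e)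
        =ᶠ[nhds x] (fun y => c * fderiv ℝ u y e + d * fderiv ℝ v y e) := by
      filter_upwards [hud, hvd] with y hy hz
      have h1 : fderiv ℝ (fun z => c * u z + d * v z + b) y
          = c • fderiv ℝ u y + d • fderiv ℝ v y := by
        rw [fderiv_add_const, fderiv_fun_add ((hy.const_mul c)) ((hz.const_mul d)),
          fderiv_const_mul hy, fderiv_const_mul hz]
      rw [h1]; simp
    rw [hev.fderiv_eq]
    rw [fderiv_fun_add ((diff_psi hu e).const_mul c) ((diff_psi hv e).const_mul d),
      fderiv_const_mul (diff_psi hu e), fderiv_const_mul (diff_psi hv e)]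
    simp
  simp only [lap, key]
  rw [Finset.sum_add_distrib, ← Finset.mul_sum, ← Finset.mul_sum]

lemma lap_normsq (n : ℕ) (x : EuclideanSpace ℝ (Fin n)) :
    lap n (fun y => ‖y‖^2) x = 2 * n := by
  have key : ∀ i : Fin n,
      fderiv ℝ (fun y => fderiv ℝ (fun z : EuclideanSpace ℝ (Fin n) => ‖z‖^2) y
        (EuclideanSpace.single i 1)) x (EuclideanSpace.single i 1) = 2 := by
    intro i
    set e : EuclideanSpace ℝ (Fin n) := EuclideanSpace.single i 1 with he
    have h1 : (fun y => fderiv ℝ (fun z : EuclideanSpace ℝ (Fin n) => ‖z‖^2) y e)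
        = fun y => 2 * (innerSL ℝ e) y := by
      funext y
      rw [(hasStrictFDerivAt_norm_sq y).hasFDerivAt.fderiv]
      simp only [ContinuousLinearMap.smul_apply, innerSL_apply_apply]
      rw [nsmul_eq_mul, real_inner_comm y e]
      norm_num
    have h3 : (innerSL ℝ e) e = (1:ℝ) := by
      have h4 : (innerSL ℝ e) e = @inner ℝ _ _ e e := rfl
      rw [h4, real_inner_self_eq_norm_sq, he, EuclideanSpace.norm_single]
      norm_num
    have h2 : fderiv ℝ (fun y => (innerSL ℝ e) y) x = innerSL ℝ e :=
      (innerSL ℝ e).fderiv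
    rw [h1, fderiv_const_mul ((innerSL ℝ e).differentiable.differentiableAt), h2,
      ContinuousLinearMap.smul_apply, h3, smul_eq_mul, mul_one]
  simp only [lap, key]
  simp [Finset.sum_const, mul_comm]

lemma minPrinciple (n : ℕ) (hn : 0 < n) (f : EuclideanSpace ℝ (Fin n) → ℝ)
    (r R : ℝ) (hr : 0 < r) (hrR : r < R)
    (hcont : ContinuousOn f {y : EuclideanSpace ℝ (Fin n) | r ≤ ‖y‖ ∧ ‖y‖ ≤ R})
    (hreg : ∀ y : EuclideanSpace ℝ (Fin n), r < ‖y‖ → ‖y‖ < R → ContDiffAt ℝ 2 f y)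
    (hharm : ∀ y : EuclideanSpace ℝ (Fin n), r < ‖y‖ → ‖y‖ < R → lap n f y = 0)
    (hbd : ∀ y : EuclideanSpace ℝ (Fin n), ‖y‖ = r ∨ ‖y‖ = R → 0 ≤ f y) :
    ∀ x : EuclideanSpace ℝ (Fin n), r ≤ ‖x‖ → ‖x‖ ≤ R → 0 ≤ f x := by
  intro x hx1 hx2
  set A : Set (EuclideanSpace ℝ (Fin n)) := {y | r ≤ ‖y‖ ∧ ‖y‖ ≤ R} with hA
  have hAclosed : IsClosed A := by
    have : A = (fun y : EuclideanSpace ℝ (Fin n) => ‖y‖) ⁻¹' Set.Icc r R := by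
      ext y; simp [hA, Set.mem_Icc]
    rw [this]
    exact (isClosed_Icc).preimage continuous_norm
  have hAcomp : IsCompact A := by
    refine (isCompact_closedBall (0 : EuclideanSpace ℝ (Fin n)) R).of_isClosed_subset hAclosed ?_
    intro y hy
    simpa [Metric.mem_closedBall, dist_zero_right] using hy.2
  have hxA : x ∈ A := ⟨hx1, hx2⟩
  -- reduce to the δ-perturbation bound
  have key : ∀ δ : ℝ, 0 < δ → -δ * R^2 ≤ f x := by
    intro δ hδ
    set g : EuclideanSpace ℝ (Fin n) → ℝ := fun y => f y + (-δ) * ‖y‖^2 + 0 with hg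
    have hgcont : ContinuousOn g A :=
      (hcont.add (((continuous_const.mul ((continuous_norm).pow 2))).continuousOn)).add
        continuousOn_const
    obtain ⟨z, hzA, hzmin⟩ := hAcomp.exists_isMinOn ⟨x, hxA⟩ hgcont
    by_cases hzi : r < ‖z‖ ∧ ‖z‖ < R
    · exfalso
      have hO : IsOpen {y : EuclideanSpace ℝ (Fin n) | r < ‖y‖ ∧ ‖y‖ < R} := by
        have : {y : EuclideanSpace ℝ (Fin n) | r < ‖y‖ ∧ ‖y‖ < R}
            = (fun y : EuclideanSpace ℝ (Fin n) => ‖y‖) ⁻¹' Set.Ioo r R := by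
          ext y; simp [Set.mem_Ioo]
        rw [this]; exact isOpen_Ioo.preimage continuous_norm
      have hnhds : A ∈ nhds z := by
        refine Filter.mem_of_superset (hO.mem_nhds hzi) ?_
        intro y hy; exact ⟨hy.1.le, hy.2.le⟩
      have hlocmin : IsLocalMin g z := hzmin.isLocalMin hnhds
      have hgreg : ContDiffAt ℝ 2 g z := by
        refine ContDiffAt.add (ContDiffAt.add (hreg z hzi.1 hzi.2) ?_) contDiffAt_const
        exact contDiffAt_const.mul ((contDiff_norm_sq ℝ).contDiffAt)
      have h0 : 0 ≤ lap n g z := lap_nonneg_localMin n hgreg hlocmin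
      have h1 : lap n g z = lap n f z + (-δ) * lap n (fun y : EuclideanSpace ℝ (Fin n) => ‖y‖^2) z := by
        have := lap_comb n (hreg z hzi.1 hzi.2) ((contDiff_norm_sq ℝ).contDiffAt)
          1 (-δ) 0
        have heq : (fun y => f y + (-δ) * ‖y‖^2 + 0) = fun y => 1 * f y + (-δ) * ‖y‖^2 + 0 := by
          funext y; ring
        rw [hg, heq, this]; ring
      rw [h1, hharm z hzi.1 hzi.2, lap_normsq] at h0
      have : (0:ℝ) < n := by exact_mod_cast hn
      nlinarith
    · have hzb : ‖z‖ = r ∨ ‖z‖ = R := by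
        rcases hzA with ⟨h1, h2⟩
        rcases not_and_or.1 hzi with h | h
        · left; linarith [not_lt.1 h]
        · right; linarith [not_lt.1 h]
      have hfz : 0 ≤ f z := hbd z hzb
      have hzR : ‖z‖ ≤ R := hzA.2
      have hgz : -δ * R^2 ≤ g z := by
        have : ‖z‖^2 ≤ R^2 := by nlinarith [norm_nonneg z]
        simp only [hg, add_zero]
        nlinarith
      have hgx : g z ≤ g x := hzmin hxA
      have : g x ≤ f x := by
        simp only [hg, add_zero]
        nlinarith [norm_nonneg x, sq_nonneg (‖x‖)]
      linarith
  by_contra hneg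
  push_neg at hneg
  have hR : 0 < R := lt_trans hr hrR
  have hδ : 0 < -f x / (R^2 + 1) := div_pos (by linarith) (by positivity)
  have := key _ hδ
  have hlt : -(-f x / (R^2+1)) * R^2 > f x := by
    rw [gt_iff_lt, neg_div, neg_neg, div_mul_eq_mul_div, lt_div_iff₀ (by positivity)]
    nlinarith
  linarith

lemma comap_ev {n : ℕ} {p : EuclideanSpace ℝ (Fin n) → Prop}
    (h : ∀ᶠ x in Filter.comap (fun x : EuclideanSpace ℝ (Fin n) => ‖x‖) Filter.atTop, p x) :
    ∃ M : ℝ, ∀ x : EuclideanSpace ℝ (Fin n), M ≤ ‖x‖ → p x := by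
  rw [Filter.eventually_comap] at h
  obtain ⟨M, hM⟩ := Filter.eventually_atTop.1 h
  exact ⟨M, fun x hx => hM ‖x‖ hx x rfl⟩

lemma isOpen_ext (n : ℕ) : IsOpen {x : EuclideanSpace ℝ (Fin n) | 1 < ‖x‖} := by
  have : {x : EuclideanSpace ℝ (Fin n) | 1 < ‖x‖}
      = (fun y : EuclideanSpace ℝ (Fin n) => ‖y‖) ⁻¹' Set.Ioi 1 := rfl
  rw [this]; exact isOpen_Ioi.preimage continuous_norm

lemma comparison (n : ℕ) (hn : 0 < n) (u v : EuclideanSpace ℝ (Fin n) → ℝ)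
    (hucont : ContinuousOn u {x : EuclideanSpace ℝ (Fin n) | 1 ≤ ‖x‖})
    (hvcont : ContinuousOn v {x : EuclideanSpace ℝ (Fin n) | 1 ≤ ‖x‖})
    (hureg : ContDiffOn ℝ 2 u {x : EuclideanSpace ℝ (Fin n) | 1 < ‖x‖})
    (hvreg : ContDiffOn ℝ 2 v {x : EuclideanSpace ℝ (Fin n) | 1 < ‖x‖})
    (huharm : ∀ x : EuclideanSpace ℝ (Fin n), 1 < ‖x‖ → lap n u x = 0)
    (hvharm : ∀ x : EuclideanSpace ℝ (Fin n), 1 < ‖x‖ → lap n v x = 0)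
    (c₁ c₂ C M : ℝ)
    (hbig : ∀ y : EuclideanSpace ℝ (Fin n), M ≤ ‖y‖ → 0 ≤ c₁ * u y + c₂ * v y + C)
    (hsph : ∀ y : EuclideanSpace ℝ (Fin n), ‖y‖ = 1 → 0 ≤ c₁ * u y + c₂ * v y + C) :
    ∀ x : EuclideanSpace ℝ (Fin n), 1 ≤ ‖x‖ → 0 ≤ c₁ * u x + c₂ * v x + C := by
  intro x hx
  set R : ℝ := max (max (M+1) 2) (‖x‖+1) with hR
  have hR2 : (2:ℝ) ≤ R := le_trans (le_max_right _ _) (le_max_left _ _)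
  have hRx : ‖x‖ ≤ R := le_trans (by linarith) (le_max_right _ _)
  have hRM : M + 1 ≤ R := le_trans (le_max_left _ _) (le_max_left _ _)
  have hsub : {y : EuclideanSpace ℝ (Fin n) | 1 ≤ ‖y‖ ∧ ‖y‖ ≤ R}
      ⊆ {y : EuclideanSpace ℝ (Fin n) | 1 ≤ ‖y‖} := fun y hy => hy.1
  have hCAt : ∀ y : EuclideanSpace ℝ (Fin n), 1 < ‖y‖ →
      ContDiffAt ℝ 2 u y ∧ ContDiffAt ℝ 2 v y := by
    intro y hy
    exact ⟨hureg.contDiffAt ((isOpen_ext n).mem_nhds hy),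
      hvreg.contDiffAt ((isOpen_ext n).mem_nhds hy)⟩
  refine minPrinciple n hn (fun y => c₁ * u y + c₂ * v y + C) 1 R one_pos (by linarith) ?_ ?_ ?_ ?_ x hx hRx
  · exact ((continuousOn_const.mul (hucont.mono hsub)).add
      (continuousOn_const.mul (hvcont.mono hsub))).add continuousOn_const
  · intro y hy _
    exact ((contDiffAt_const.mul (hCAt y hy).1).add
      (contDiffAt_const.mul (hCAt y hy).2)).add contDiffAt_const
  · intro y hy _
    rw [lap_comb n (hCAt y hy).1 (hCAt y hy).2 c₁ c₂ C, huharm y hy, hvharm y hy]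
    ring
  · intro y hy
    rcases hy with hy | hy
    · exact hsph y hy
    · exact hbig y (by rw [hy]; linarith)

/-- if `u, v` are harmonic in the exterior domain, tend to `+∞` and
`u/v → a ∈ (0,∞)`, then `a·v − a·max_{∂B₁} v + min_{∂B₁} u ≤ u ≤ a·v − a·min_{∂B₁} v +
max_{∂B₁} u`; in particular `|u − a·v|` is bounded. -/
theorem stmt13 (n : ℕ) (hn : 3 ≤ n) (u v : EuclideanSpace ℝ (Fin n) → ℝ)
    (hucont : ContinuousOn u {x : EuclideanSpace ℝ (Fin n) | 1 ≤ ‖x‖})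
    (hvcont : ContinuousOn v {x : EuclideanSpace ℝ (Fin n) | 1 ≤ ‖x‖})
    (hureg : ContDiffOn ℝ 2 u {x : EuclideanSpace ℝ (Fin n) | 1 < ‖x‖})
    (hvreg : ContDiffOn ℝ 2 v {x : EuclideanSpace ℝ (Fin n) | 1 < ‖x‖})
    (huharm : ∀ x : EuclideanSpace ℝ (Fin n), 1 < ‖x‖ → lap n u x = 0)
    (hvharm : ∀ x : EuclideanSpace ℝ (Fin n), 1 < ‖x‖ → lap n v x = 0)
    (hulim : Filter.Tendsto u (Filter.comap (fun x : EuclideanSpace ℝ (Fin n) => ‖x‖)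
      Filter.atTop) Filter.atTop)
    (hvlim : Filter.Tendsto v (Filter.comap (fun x : EuclideanSpace ℝ (Fin n) => ‖x‖)
      Filter.atTop) Filter.atTop)
    (a : ℝ) (ha : 0 < a)
    (hratio : Filter.Tendsto (fun x => u x / v x)
      (Filter.comap (fun x : EuclideanSpace ℝ (Fin n) => ‖x‖) Filter.atTop) (nhds a)) :
    (∀ x : EuclideanSpace ℝ (Fin n), 1 ≤ ‖x‖ →
      a * v x - a * sSup {t : ℝ | ∃ y : EuclideanSpace ℝ (Fin n), ‖y‖ = 1 ∧ t = v y}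
          + sInf {t : ℝ | ∃ y : EuclideanSpace ℝ (Fin n), ‖y‖ = 1 ∧ t = u y} ≤ u x ∧
      u x ≤ a * v x - a * sInf {t : ℝ | ∃ y : EuclideanSpace ℝ (Fin n), ‖y‖ = 1 ∧ t = v y}
          + sSup {t : ℝ | ∃ y : EuclideanSpace ℝ (Fin n), ‖y‖ = 1 ∧ t = u y}) ∧
    ∃ C : ℝ, ∀ x : EuclideanSpace ℝ (Fin n), 1 ≤ ‖x‖ → |u x - a * v x| ≤ C := by
  have hn0 : 0 < n := by omega
  set sph : Set (EuclideanSpace ℝ (Fin n)) := {y | ‖y‖ = 1} with hsph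
  have hsphc : IsCompact sph := by
    have : sph = Metric.sphere (0 : EuclideanSpace ℝ (Fin n)) 1 := by
      ext y; simp [hsph, Metric.mem_sphere, dist_zero_right]
    rw [this]; exact isCompact_sphere _ _
  have hsphsub : sph ⊆ {x : EuclideanSpace ℝ (Fin n) | 1 ≤ ‖x‖} := fun y hy => le_of_eq hy.symm
  set y0 : EuclideanSpace ℝ (Fin n) := EuclideanSpace.single (⟨0, by omega⟩ : Fin n) 1 with hy0def
  have hy0 : ‖y0‖ = 1 := by rw [hy0def, EuclideanSpace.norm_single]; norm_num
  have hKu : IsCompact (u '' sph) := hsphc.image_of_continuousOn (hucont.mono hsphsub)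
  have hKv : IsCompact (v '' sph) := hsphc.image_of_continuousOn (hvcont.mono hsphsub)
  have hKune : (u '' sph).Nonempty := ⟨u y0, y0, hy0, rfl⟩
  have hKvne : (v '' sph).Nonempty := ⟨v y0, y0, hy0, rfl⟩
  set Mu : ℝ := sSup (u '' sph) with hMudef
  set mu : ℝ := sInf (u '' sph) with hmudef
  set Mv : ℝ := sSup (v '' sph) with hMvdef
  set mv : ℝ := sInf (v '' sph) with hmvdef
  have hSu : {t : ℝ | ∃ y : EuclideanSpace ℝ (Fin n), ‖y‖ = 1 ∧ t = u y} = u '' sph := by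
    ext t; constructor
    · rintro ⟨y, h1, h2⟩; exact ⟨y, h1, h2.symm⟩
    · rintro ⟨y, h1, h2⟩; exact ⟨y, h1, h2.symm⟩
  have hSv : {t : ℝ | ∃ y : EuclideanSpace ℝ (Fin n), ‖y‖ = 1 ∧ t = v y} = v '' sph := by
    ext t; constructor
    · rintro ⟨y, h1, h2⟩; exact ⟨y, h1, h2.symm⟩
    · rintro ⟨y, h1, h2⟩; exact ⟨y, h1, h2.symm⟩
  have hMu : ∀ y : EuclideanSpace ℝ (Fin n), ‖y‖ = 1 → u y ≤ Mu :=
    fun y hy => le_csSup hKu.bddAbove ⟨y, hy, rfl⟩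
  have hmu : ∀ y : EuclideanSpace ℝ (Fin n), ‖y‖ = 1 → mu ≤ u y :=
    fun y hy => csInf_le hKu.bddBelow ⟨y, hy, rfl⟩
  have hMv : ∀ y : EuclideanSpace ℝ (Fin n), ‖y‖ = 1 → v y ≤ Mv :=
    fun y hy => le_csSup hKv.bddAbove ⟨y, hy, rfl⟩
  have hmv : ∀ y : EuclideanSpace ℝ (Fin n), ‖y‖ = 1 → mv ≤ v y :=
    fun y hy => csInf_le hKv.bddBelow ⟨y, hy, rfl⟩
  -- upper comparison for each ε > 0
  have claim_up : ∀ ε : ℝ, 0 < ε → ∀ x : EuclideanSpace ℝ (Fin n), 1 ≤ ‖x‖ →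
      u x ≤ (a + ε) * v x + (Mu - (a + ε) * mv) := by
    intro ε hε x hx
    set K : ℝ := max 1 ((2/ε) * ((a+ε)*mv - Mu)) with hK
    have hev : ∀ᶠ y in Filter.comap (fun x : EuclideanSpace ℝ (Fin n) => ‖x‖) Filter.atTop,
        u y / v y < a + ε/2 ∧ K ≤ v y :=
      (hratio.eventually_lt_const (by linarith)).and (hvlim.eventually_ge_atTop K)
    obtain ⟨M, hM⟩ := comap_ev hev
    have := comparison n hn0 u v hucont hvcont hureg hvreg huharm hvharm
      (-1) (a+ε) (Mu - (a+ε)*mv) M ?_ ?_ x hx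
    · linarith
    · intro y hy
      obtain ⟨h1, h2⟩ := hM y hy
      have hv1 : (1:ℝ) ≤ v y := le_trans (le_max_left _ _) h2
      have hv0 : (0:ℝ) < v y := by linarith
      have hu1 : u y < (a + ε/2) * v y := (div_lt_iff₀ hv0).1 h1
      have h3 : (2/ε) * ((a+ε)*mv - Mu) ≤ v y := le_trans (le_max_right _ _) h2
      have h4 : (ε/2) * ((2/ε) * ((a+ε)*mv - Mu)) ≤ (ε/2) * v y :=
        mul_le_mul_of_nonneg_left h3 (by positivity)
      have h5 : (ε/2) * ((2/ε) * ((a+ε)*mv - Mu)) = (a+ε)*mv - Mu := by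
        field_simp
      rw [h5] at h4
      nlinarith
    · intro y hy
      have h1 := hMu y hy
      have h2 := hmv y hy
      have h3 : (a+ε) * mv ≤ (a+ε) * v y := mul_le_mul_of_nonneg_left h2 (by linarith)
      linarith
  -- lower comparison for each 0 < ε < a
  have claim_lo : ∀ ε : ℝ, 0 < ε → ε < a → ∀ x : EuclideanSpace ℝ (Fin n), 1 ≤ ‖x‖ →
      (a - ε) * v x + (mu - (a - ε) * Mv) ≤ u x := by
    intro ε hε hεa x hx
    set K : ℝ := max 1 ((2/ε) * (mu - (a-ε)*Mv)) with hK
    have hev : ∀ᶠ y in Filter.comap (fun x : EuclideanSpace ℝ (Fin n) => ‖x‖) Filter.atTop,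
        a - ε/2 < u y / v y ∧ K ≤ v y :=
      (hratio.eventually_const_lt (by linarith)).and (hvlim.eventually_ge_atTop K)
    obtain ⟨M, hM⟩ := comap_ev hev
    have := comparison n hn0 u v hucont hvcont hureg hvreg huharm hvharm
      1 (-(a-ε)) ((a-ε)*Mv - mu) M ?_ ?_ x hx
    · linarith
    · intro y hy
      obtain ⟨h1, h2⟩ := hM y hy
      have hv1 : (1:ℝ) ≤ v y := le_trans (le_max_left _ _) h2
      have hv0 : (0:ℝ) < v y := by linarith
      have hu1 : (a - ε/2) * v y < u y := (lt_div_iff₀ hv0).1 h1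
      have h3 : (2/ε) * (mu - (a-ε)*Mv) ≤ v y := le_trans (le_max_right _ _) h2
      have h4 : (ε/2) * ((2/ε) * (mu - (a-ε)*Mv)) ≤ (ε/2) * v y :=
        mul_le_mul_of_nonneg_left h3 (by positivity)
      have h5 : (ε/2) * ((2/ε) * (mu - (a-ε)*Mv)) = mu - (a-ε)*Mv := by
        field_simp
      rw [h5] at h4
      nlinarith
    · intro y hy
      have h1 := hmu y hy
      have h2 := hMv y hy
      have h3 : (a-ε) * v y ≤ (a-ε) * Mv := mul_le_mul_of_nonneg_left h2 (by linarith)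
      linarith
  -- pass to the limit ε → 0⁺
  have main : ∀ x : EuclideanSpace ℝ (Fin n), 1 ≤ ‖x‖ →
      a * v x - a * Mv + mu ≤ u x ∧ u x ≤ a * v x - a * mv + Mu := by
    intro x hx
    constructor
    · have ht : Filter.Tendsto (fun ε : ℝ => (a - ε) * v x + (mu - (a - ε) * Mv))
          (nhdsWithin 0 (Set.Ioi 0)) (nhds (a * v x - a * Mv + mu)) := by
        have hc : Continuous (fun ε : ℝ => (a - ε) * v x + (mu - (a - ε) * Mv)) := by
          fun_prop
        have := (hc.tendsto 0).mono_left (nhdsWithin_le_nhds (s := Set.Ioi (0:ℝ)))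
        have heq : (a - 0) * v x + (mu - (a - 0) * Mv) = a * v x - a * Mv + mu := by ring
        rwa [heq] at this
      refine le_of_tendsto ht ?_
      filter_upwards [self_mem_nhdsWithin,
        eventually_nhdsWithin_of_eventually_nhds (gt_mem_nhds ha)] with ε (hε : (0:ℝ) < ε) hεa
      exact claim_lo ε hε hεa x hx
    · have ht : Filter.Tendsto (fun ε : ℝ => (a + ε) * v x + (Mu - (a + ε) * mv))
          (nhdsWithin 0 (Set.Ioi 0)) (nhds (a * v x - a * mv + Mu)) := by
        have hc : Continuous (fun ε : ℝ => (a + ε) * v x + (Mu - (a + ε) * mv)) := by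
          fun_prop
        have := (hc.tendsto 0).mono_left (nhdsWithin_le_nhds (s := Set.Ioi (0:ℝ)))
        have heq : (a + 0) * v x + (Mu - (a + 0) * mv) = a * v x - a * mv + Mu := by ring
        rwa [heq] at this
      refine ge_of_tendsto ht ?_
      filter_upwards [self_mem_nhdsWithin] with ε (hε : (0:ℝ) < ε)
      exact claim_up ε hε x hx
  constructor
  · intro x hx
    rw [hSu, hSv]
    exact ⟨(main x hx).1, (main x hx).2⟩
  · refine ⟨max (Mu - a * mv) (a * Mv - mu), fun x hx => ?_⟩
    obtain ⟨h1, h2⟩ := main x hx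
    rw [abs_le]
    constructor
    · have := le_max_right (Mu - a * mv) (a * Mv - mu)
      linarith
    · have := le_max_left (Mu - a * mv) (a * Mv - mu)
      linarith
end
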